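/- Let H be a mesh and τ_1, τ_2 distributed types with H ⊢ τ_1 and H ⊢ τ_2. If globaltype(τ_1) = globaltype(τ_2) and localtype(τ_1) = localtype(τ_2), then there exists a bijection π of the set of index tuples over H such that ⟦τ_2⟧_T = ⟦τ_1⟧_T ∘ π. -/

import Mathlib

/-! ## Meshes, index tuples, distributed dimensions and types -/

structure Mesh where
  axes : Finset String
  size : String → ℕ
  size_pos : ∀ x ∈ axes, 1 ≤ size x

def Mesh.hasAxis (H : Mesh) (x : String) (n : ℕ) : Prop :=
  x ∈ H.axes ∧ H.size x = n

abbrev IndexTuple (H : Mesh) : Type :=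
  {ι : String → ℕ // ∀ x : String, (x ∈ H.axes → ι x < H.size x) ∧ (x ∉ H.axes → ι x = 0)}

structure Dim where
  tile : ℕ
  axes : List String
  global : ℕ
deriving DecidableEq

abbrev DType := List Dim

def Mesh.WFDim (H : Mesh) (d : Dim) : Prop :=
  1 ≤ d.tile ∧ d.axes.Nodup ∧ (∀ x ∈ d.axes, x ∈ H.axes) ∧
    d.tile * (d.axes.map H.size).prod = d.global

def Mesh.WFType (H : Mesh) (τ : DType) : Prop :=
  (∀ d ∈ τ, H.WFDim d) ∧ List.Pairwise (fun d e => ∀ x ∈ d.axes, x ∉ e.axes) τ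

def globaltype (τ : DType) : List ℕ := τ.map Dim.global
def localtype (τ : DType) : List ℕ := τ.map Dim.tile
def localsize (τ : DType) : ℕ := (τ.map Dim.tile).prod

def typeAxes : DType → List String
  | [] => []
  | d :: τ => d.axes ++ typeAxes τ

/-- Base offset map of a distributed dimension, `⟦c{xs}n⟧_D`. -/
def dimOffset (H : Mesh) : ℕ → List String → (String → ℕ) → ℕ
  | _, [], _ => 0
  | c, x :: xs, ι => c * ι x + dimOffset H (c * H.size x) xs ι

abbrev BOM (H : Mesh) : Type := IndexTuple H → List ℕ

/-- Base offset map of a distributed type, `⟦τ⟧_T`. -/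
def typeOffset (H : Mesh) (τ : DType) : BOM H :=
  fun ι => τ.map (fun d => dimOffset H d.tile d.axes ι.val)

/-! ## Collective operations (high-level typing rules) -/

inductive Label where
  | allGather (i : ℕ)
  | dynSlice (i : ℕ) (x : String)
  | allToAll (i j : ℕ)
  | allPermute
deriving DecidableEq

inductive OpKind where
  | gather | slice | toAll | permute
deriving DecidableEq

def Label.kind : Label → OpKind
  | .allGather _ => .gather
  | .dynSlice _ _ => .slice
  | .allToAll _ _ => .toAll
  | .allPermute => .permute

inductive Step (H : Mesh) : Label → DType → DType → Prop where
  | allGather {τ : DType} (i : ℕ) {c : ℕ} {x : String} {xs : List String} {s n : ℕ}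
      (hwf : H.WFType τ) (hx : H.hasAxis x n)
      (hi : τ[i]? = some ⟨c, x :: xs, s⟩) :
      Step H (.allGather i) τ (τ.set i ⟨c * n, xs, s⟩)
  | dynSlice {τ : DType} (i : ℕ) (x : String) {c : ℕ} {xs : List String} {s n : ℕ}
      (hwf : H.WFType τ) (hx : H.hasAxis x n) (hfresh : x ∉ typeAxes τ)
      (hi : τ[i]? = some ⟨c * n, xs, s⟩) :
      Step H (.dynSlice i x) τ (τ.set i ⟨c, x :: xs, s⟩)
  | allToAll {τ : DType} (i j : ℕ) {ci : ℕ} {x : String} {xsi : List String} {si cj : ℕ}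
      {xsj : List String} {sj n : ℕ}
      (hwf : H.WFType τ) (hij : i ≠ j) (hx : H.hasAxis x n)
      (hi : τ[i]? = some ⟨ci, x :: xsi, si⟩)
      (hj : τ[j]? = some ⟨cj, xsj, sj⟩)
      (hdvd : n ∣ cj) :
      Step H (.allToAll i j) τ ((τ.set i ⟨ci * n, xsi, si⟩).set j ⟨cj / n, x :: xsj, sj⟩)
  | allPermute {τ₁ τ₂ : DType}
      (hwf1 : H.WFType τ₁) (hwf2 : H.WFType τ₂)
      (hl : localtype τ₁ = localtype τ₂) (hg : globaltype τ₁ = globaltype τ₂) :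
      Step H .allPermute τ₁ τ₂

/-! ## Sequences of collective operations -/

inductive CSeq (H : Mesh) : DType → DType → Type where
  | nil (τ : DType) : CSeq H τ τ
  | cons {τ₁ τ₂ τ₃ : DType} (p : Label) (h : Step H p τ₁ τ₂) (s : CSeq H τ₂ τ₃) : CSeq H τ₁ τ₃

def CSeq.labels {H : Mesh} : {τ₁ τ₂ : DType} → CSeq H τ₁ τ₂ → List Label
  | _, _, .nil _ => []
  | _, _, .cons p _ s => p :: s.labels

def CSeq.typesList {H : Mesh} : {τ₁ τ₂ : DType} → CSeq H τ₁ τ₂ → List DType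
  | _, _, .nil τ => [τ]
  | τ, _, .cons _ _ s => τ :: s.typesList

/-- The height 𝔥 of a sequence: the maximum `localsize` over all types in it. -/
def CSeq.height {H : Mesh} {τ₁ τ₂ : DType} (s : CSeq H τ₁ τ₂) : ℕ :=
  (s.typesList.map localsize).foldr max 0

/-- Cost of a single step with source `σ₁` and target `σ₂`. -/
def stepCost (p : Label) (σ₁ σ₂ : DType) : ℕ :=
  match p with
  | .allGather _ => localsize σ₂
  | .dynSlice _ _ => 0
  | .allToAll _ _ => localsize σ₁
  | .allPermute => localsize σ₁

def CSeq.cost {H : Mesh} : {τ₁ τ₂ : DType} → CSeq H τ₁ τ₂ → ℕ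
  | _, _, .nil _ => 0
  | _, _, @CSeq.cons _ σ₁ σ₂ _ p _ s => stepCost p σ₁ σ₂ + s.cost

/-- Normal form: labels matched by `dynSlice* {allToAll | allPermute}* allGather*`. -/
def NormalFormK (ks : List OpKind) : Prop :=
  ∃ a b c : List OpKind, ks = a ++ b ++ c ∧
    (∀ k ∈ a, k = OpKind.slice) ∧
    (∀ k ∈ b, k = OpKind.toAll ∨ k = OpKind.permute) ∧
    (∀ k ∈ c, k = OpKind.gather)

/-! ## Weak collectives -/

/-- Equivalence of base offset maps. -/
def bomEquiv (H : Mesh) (β₁ β₂ : BOM H) : Prop :=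
  ∃ π : Equiv.Perm (IndexTuple H), β₂ = β₁ ∘ π

/-- The weak collective relation `⟦τ₁⟧_E ▶^p ⟦τ₂⟧_E`, represented on types. -/
def WeakStep (H : Mesh) (p : Label) (τ₁ τ₂ : DType) : Prop :=
  p ≠ Label.allPermute ∧ H.WFType τ₁ ∧ H.WFType τ₂ ∧
  ∃ σ₁ σ₂ : DType, Step H p σ₁ σ₂ ∧
    bomEquiv H (typeOffset H σ₁) (typeOffset H τ₁) ∧
    bomEquiv H (typeOffset H σ₂) (typeOffset H τ₂)

inductive WkSeq (H : Mesh) : DType → DType → Type where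
  | nil (τ : DType) : WkSeq H τ τ
  | cons {τ₁ τ₂ τ₃ : DType} (p : Label) (h : WeakStep H p τ₁ τ₂) (s : WkSeq H τ₂ τ₃) :
      WkSeq H τ₁ τ₃

def WkSeq.labels {H : Mesh} : {τ₁ τ₂ : DType} → WkSeq H τ₁ τ₂ → List Label
  | _, _, .nil _ => []
  | _, _, .cons p _ s => p :: s.labels

def WkSeq.typesList {H : Mesh} : {τ₁ τ₂ : DType} → WkSeq H τ₁ τ₂ → List DType
  | _, _, .nil τ => [τ]
  | τ, _, .cons _ _ s => τ :: s.typesList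

def WkSeq.height {H : Mesh} {τ₁ τ₂ : DType} (s : WkSeq H τ₁ τ₂) : ℕ :=
  (s.typesList.map localsize).foldr max 0

def WkSeq.cost {H : Mesh} : {τ₁ τ₂ : DType} → WkSeq H τ₁ τ₂ → ℕ
  | _, _, .nil _ => 0
  | _, _, @WkSeq.cons _ σ₁ σ₂ _ p _ s => stepCost p σ₁ σ₂ + s.cost

/-! ## Low-level MPI-style collectives on device assignments -/

abbrev DevMap (H : Mesh) (D : Type) := IndexTuple H ≃ D

structure DevAssign (H : Mesh) (D : Type) where
  dmap : DevMap H D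
  bom : BOM H

inductive LLabel where
  | allGather (x : String)
  | allToAll (x : String) (j : ℕ)
  | dynSlice (i : ℕ) (x : String)
  | allPermute
deriving DecidableEq

def LLabel.kind : LLabel → OpKind
  | .allGather _ => .gather
  | .allToAll _ _ => .toAll
  | .dynSlice _ _ => .slice
  | .allPermute => .permute

inductive LStep (H : Mesh) (D : Type) : LLabel → DevAssign H D → DevAssign H D → Type where
  | gather (τ : DType) (i : ℕ) (c : ℕ) (ys : List String) (x : String) (xs : List String)
      (s n : ℕ) (φ φ' : DevMap H D)
      (hwf : H.WFType τ) (hx : H.hasAxis x n)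
      (hi : τ[i]? = some ⟨c, ys ++ x :: xs, s⟩)
      (hmap : typeOffset H (τ.set i ⟨c, x :: (ys ++ xs), s⟩) ∘ ⇑φ'.symm
            = typeOffset H τ ∘ ⇑φ.symm) :
      LStep H D (.allGather x) ⟨φ, typeOffset H τ⟩
        ⟨φ', typeOffset H (τ.set i ⟨c * n, ys ++ xs, s⟩)⟩
  | toAll (τ : DType) (i j : ℕ) (ci : ℕ) (ys : List String) (x : String) (xs : List String)
      (si cj : ℕ) (xsj : List String) (sj n : ℕ) (φ φ' : DevMap H D)
      (hwf : H.WFType τ) (hij : i ≠ j) (hx : H.hasAxis x n)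
      (hi : τ[i]? = some ⟨ci, ys ++ x :: xs, si⟩)
      (hj : τ[j]? = some ⟨cj, xsj, sj⟩)
      (hdvd : n ∣ cj)
      (hmap : typeOffset H (τ.set i ⟨ci, x :: (ys ++ xs), si⟩) ∘ ⇑φ'.symm
            = typeOffset H τ ∘ ⇑φ.symm) :
      LStep H D (.allToAll x j) ⟨φ, typeOffset H τ⟩
        ⟨φ', typeOffset H ((τ.set i ⟨ci * n, ys ++ xs, si⟩).set j ⟨cj / n, x :: xsj, sj⟩)⟩
  | slice (τ : DType) (i : ℕ) (x : String) (c : ℕ) (xs : List String) (s n : ℕ)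
      (φ : DevMap H D)
      (hwf : H.WFType τ) (hx : H.hasAxis x n) (hfresh : x ∉ typeAxes τ)
      (hi : τ[i]? = some ⟨c * n, xs, s⟩) :
      LStep H D (.dynSlice i x) ⟨φ, typeOffset H τ⟩ ⟨φ, typeOffset H (τ.set i ⟨c, x :: xs, s⟩)⟩
  | permute (τ : DType) (ρ : Equiv.Perm (IndexTuple H)) (β' : BOM H)
      (φ φ' : DevMap H D) (π : Equiv.Perm D)
      (hwf : H.WFType τ)
      (hmap : β' ∘ ⇑φ'.symm = (typeOffset H τ ∘ ⇑ρ) ∘ ⇑φ.symm ∘ ⇑π) :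
      LStep H D .allPermute ⟨φ, typeOffset H τ ∘ ⇑ρ⟩ ⟨φ', β'⟩

def LStep.cost {H : Mesh} {D : Type} :
    {l : LLabel} → {a b : DevAssign H D} → LStep H D l a b → ℕ
  | _, _, _, .gather τ i c ys x xs s n .. => localsize (τ.set i ⟨c * n, ys ++ xs, s⟩)
  | _, _, _, .toAll τ .. => localsize τ
  | _, _, _, .slice .. => 0
  | _, _, _, .permute τ .. => localsize τ

inductive LoSeq (H : Mesh) (D : Type) : DevAssign H D → DevAssign H D → Type where
  | nil (a : DevAssign H D) : LoSeq H D a a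
  | cons {a b c : DevAssign H D} (l : LLabel) (st : LStep H D l a b) (s : LoSeq H D b c) :
      LoSeq H D a c

def LoSeq.labels {H : Mesh} {D : Type} : {a b : DevAssign H D} → LoSeq H D a b → List LLabel
  | _, _, .nil _ => []
  | _, _, .cons l _ s => l :: s.labels

def LoSeq.states {H : Mesh} {D : Type} : {a b : DevAssign H D} → LoSeq H D a b → List (DevAssign H D)
  | _, _, .nil a => [a]
  | a, _, .cons _ _ s => a :: s.states

def LoSeq.cost {H : Mesh} {D : Type} : {a b : DevAssign H D} → LoSeq H D a b → ℕ
  | _, _, .nil _ => 0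
  | _, _, .cons _ st s => st.cost + s.cost
section Stmt7Aux

variable {H : Mesh}

/-- Raw offset map on bare functions. -/
def rawOffset (H : Mesh) (τ : DType) (g : String → ℕ) : List ℕ :=
  τ.map (fun d => dimOffset H d.tile d.axes g)

lemma typeOffset_eq_raw (τ : DType) (ι : IndexTuple H) :
    typeOffset H τ ι = rawOffset H τ ι.val := rfl

lemma dimOffset_congr (c : ℕ) (xs : List String) {ι ι' : String → ℕ}
    (h : ∀ x ∈ xs, ι x = ι' x) : dimOffset H c xs ι = dimOffset H c xs ι' := by
  induction xs generalizing c with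
  | nil => rfl
  | cons x xs ih =>
    simp only [dimOffset, h x (by simp)]
    rw [ih _ fun y hy => h y (by simp [hy])]

lemma dvd_dimOffset (c : ℕ) (xs : List String) (ι : String → ℕ) :
    c ∣ dimOffset H c xs ι := by
  induction xs generalizing c with
  | nil => simp [dimOffset]
  | cons x xs ih =>
    simp only [dimOffset]
    exact dvd_add (dvd_mul_right c (ι x)) ((dvd_mul_right c (H.size x)).trans (ih _))

lemma dimOffset_add_le (c : ℕ) (xs : List String) (ι : String → ℕ)
    (hb : ∀ x ∈ xs, ι x < H.size x) :
    dimOffset H c xs ι + c ≤ c * (xs.map H.size).prod := by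
  induction xs generalizing c with
  | nil => simp [dimOffset]
  | cons x xs ih =>
    simp only [dimOffset, List.map_cons, List.prod_cons]
    have h1 : dimOffset H (c * H.size x) xs ι + c * H.size x
        ≤ c * H.size x * (xs.map H.size).prod :=
      ih _ fun y hy => hb y (by simp [hy])
    have h2 : ι x + 1 ≤ H.size x := hb x (by simp)
    have h3 : c * ι x + c ≤ c * H.size x := by
      calc c * ι x + c = c * (ι x + 1) := by ring
        _ ≤ c * H.size x := Nat.mul_le_mul_left _ h2
    calc c * ι x + dimOffset H (c * H.size x) xs ι + c
        = (c * ι x + c) + dimOffset H (c * H.size x) xs ι := by ring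
      _ ≤ c * H.size x + dimOffset H (c * H.size x) xs ι := by omega
      _ ≤ c * H.size x * (xs.map H.size).prod := by omega
      _ = c * (H.size x * (xs.map H.size).prod) := by ring

lemma dimOffset_lt (c : ℕ) (hc : 1 ≤ c) (xs : List String) (ι : String → ℕ)
    (hb : ∀ x ∈ xs, ι x < H.size x) :
    dimOffset H c xs ι < c * (xs.map H.size).prod := by
  have := dimOffset_add_le (H := H) c xs ι hb
  omega

lemma dimOffset_inj (c : ℕ) (hc : 1 ≤ c) (xs : List String) (hnd : xs.Nodup)
    {ι ι' : String → ℕ}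
    (hb : ∀ x ∈ xs, ι x < H.size x) (hb' : ∀ x ∈ xs, ι' x < H.size x)
    (heq : dimOffset H c xs ι = dimOffset H c xs ι') :
    ∀ x ∈ xs, ι x = ι' x := by
  induction xs generalizing c with
  | nil => simp
  | cons x xs ih =>
    have hk : 1 ≤ H.size x := by have := hb x (by simp); omega
    obtain ⟨a, ha⟩ := dvd_dimOffset (H := H) (c * H.size x) xs ι
    obtain ⟨b, hbb⟩ := dvd_dimOffset (H := H) (c * H.size x) xs ι'
    simp only [dimOffset] at heq
    rw [ha, hbb] at heq
    have key : ι x + H.size x * a = ι' x + H.size x * b := by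
      have : c * (ι x + H.size x * a) = c * (ι' x + H.size x * b) := by
        rw [Nat.mul_add, Nat.mul_add, ← Nat.mul_assoc, ← Nat.mul_assoc]; exact heq
      exact Nat.eq_of_mul_eq_mul_left hc this
    have hx1 : ι x < H.size x := hb x (by simp)
    have hx2 : ι' x < H.size x := hb' x (by simp)
    have hxe : ι x = ι' x := by
      have := congrArg (· % H.size x) key
      simpa [Nat.add_mul_mod_self_left, Nat.mod_eq_of_lt hx1, Nat.mod_eq_of_lt hx2] using this
    have hab : a = b := by
      rw [hxe] at key
      have : H.size x * a = H.size x * b := by omega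
      exact Nat.eq_of_mul_eq_mul_left hk this
    intro y hy
    rcases List.mem_cons.mp hy with rfl | hy
    · exact hxe
    · exact ih (c * H.size x) (Nat.mul_pos hc hk)
        hnd.of_cons (fun z hz => hb z (by simp [hz])) (fun z hz => hb' z (by simp [hz]))
        (by rw [ha, hbb, hab]) y hy

lemma dim_decode (c : ℕ) (hc : 1 ≤ c) (xs : List String) (hnd : xs.Nodup)
    (w : ℕ) (hd : c ∣ w) (hw : w < c * (xs.map H.size).prod)
    (hax : ∀ x ∈ xs, 1 ≤ H.size x) :
    ∃ g : String → ℕ, (∀ x ∈ xs, g x < H.size x) ∧ (∀ x ∉ xs, g x = 0) ∧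
      dimOffset H c xs g = w := by
  induction xs generalizing c w with
  | nil =>
    have : w = 0 := Nat.eq_zero_of_dvd_of_lt hd (by simpa using hw)
    exact ⟨fun _ => 0, by simp, by simp, by simp [dimOffset, this]⟩
  | cons x xs ih =>
    obtain ⟨m, rfl⟩ := hd
    have hk : 1 ≤ H.size x := hax x (by simp)
    have hm : m < H.size x * (xs.map H.size).prod := by
      by_contra hcon
      push_neg at hcon
      have h2 : c * (H.size x * (xs.map H.size).prod) ≤ c * m := Nat.mul_le_mul_left _ hcon
      simp only [List.map_cons, List.prod_cons] at hw
      omega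
    have hm' : m / H.size x < (xs.map H.size).prod :=
      Nat.div_lt_of_lt_mul hm
    have hpos : 0 < c * H.size x := Nat.mul_pos hc hk
    obtain ⟨g', hg1, hg2, hg3⟩ := ih (c * H.size x) hpos
      hnd.of_cons (c * H.size x * (m / H.size x)) ⟨_, rfl⟩
      ((Nat.mul_lt_mul_left hpos).mpr hm')
      (fun y hy => hax y (by simp [hy]))
    have hxnot : x ∉ xs := (List.nodup_cons.mp hnd).1
    refine ⟨fun y => if y = x then m % H.size x else g' y, ?_, ?_, ?_⟩
    · intro y hy
      rcases List.mem_cons.mp hy with rfl | hy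
      · simpa using Nat.mod_lt _ (by omega)
      · have : y ≠ x := fun h => hxnot (h ▸ hy)
        simpa [this] using hg1 y hy
    · intro y hy
      have h1 : y ≠ x := fun h => hy (by simp [h])
      have h2 : y ∉ xs := fun h => hy (by simp [h])
      simp [h1, hg2 y h2]
    · simp only [dimOffset, if_pos rfl]
      rw [dimOffset_congr (H := H) _ xs
        (ι' := g') (fun y hy => by
          have : y ≠ x := fun h => hxnot (h ▸ hy)
          simp [this]), hg3]
      calc c * (m % H.size x) + c * H.size x * (m / H.size x)
          = c * (m % H.size x + H.size x * (m / H.size x)) := by ring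
        _ = c * m := by rw [Nat.mod_add_div]

/-! Type level -/

lemma mem_typeAxes {x : String} : ∀ {τ : DType}, x ∈ typeAxes τ ↔ ∃ d ∈ τ, x ∈ d.axes := by
  intro τ
  induction τ with
  | nil => simp [typeAxes]
  | cons d τ ih => simp [typeAxes, ih]

lemma WFType_tail {d : Dim} {τ : DType} (h : H.WFType (d :: τ)) :
    H.WFType τ :=
  ⟨fun e he => h.1 e (by simp [he]), (List.pairwise_cons.mp h.2).2⟩

lemma WFType_head_disj {d : Dim} {τ : DType} (h : H.WFType (d :: τ)) :
    ∀ x ∈ d.axes, x ∉ typeAxes τ := by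
  intro x hx hmem
  obtain ⟨e, he, hxe⟩ := mem_typeAxes.mp hmem
  exact (List.pairwise_cons.mp h.2).1 e he x hx hxe

lemma typeAxes_subset {τ : DType} (h : H.WFType τ) :
    ∀ x ∈ typeAxes τ, x ∈ H.axes := by
  intro x hx
  obtain ⟨d, hd, hxd⟩ := mem_typeAxes.mp hx
  exact (h.1 d hd).2.2.1 x hxd

lemma typeAxes_nodup {τ : DType} (h : H.WFType τ) : (typeAxes τ).Nodup := by
  induction τ with
  | nil => simp [typeAxes]
  | cons d τ ih =>
    refine List.nodup_append'.mpr ⟨(h.1 d (by simp)).2.1, ih (WFType_tail h), ?_⟩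
    intro x hx
    exact WFType_head_disj h x hx

lemma rawOffset_congr (τ : DType) {g g' : String → ℕ}
    (h : ∀ x ∈ typeAxes τ, g x = g' x) : rawOffset H τ g = rawOffset H τ g' := by
  induction τ with
  | nil => rfl
  | cons d τ ih =>
    simp only [rawOffset, List.map_cons]
    rw [dimOffset_congr (H := H) _ _ (fun x hx => h x (by simp [typeAxes, hx])),
      show (τ.map fun e => dimOffset H e.tile e.axes g)
          = (τ.map fun e => dimOffset H e.tile e.axes g') from
        ih (fun x hx => h x (by simp [typeAxes, hx]))]

/-- Validity of an offset value list. -/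
def Valid (τ : DType) (v : List ℕ) : Prop :=
  List.Forall₂ (fun d w => d.tile ∣ w ∧ w < d.global) τ v

lemma valid_typeOffset (τ : DType) (hwf : H.WFType τ) (ι : IndexTuple H) :
    Valid τ (typeOffset H τ ι) := by
  induction τ with
  | nil => exact List.Forall₂.nil
  | cons d τ ih =>
    have hd := hwf.1 d (by simp)
    refine List.Forall₂.cons ⟨dvd_dimOffset _ _ _, ?_⟩ (ih (WFType_tail hwf))
    rw [← hd.2.2.2]
    exact dimOffset_lt _ hd.1 _ _ (fun x hx => (ι.2 x).1 (hd.2.2.1 x hx))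

lemma typeOffset_inj (τ : DType) (hwf : H.WFType τ) {ι ι' : IndexTuple H}
    (h : typeOffset H τ ι = typeOffset H τ ι') :
    ∀ x ∈ typeAxes τ, ι.1 x = ι'.1 x := by
  induction τ with
  | nil => simp [typeAxes]
  | cons d τ ih =>
    have hd := hwf.1 d (by simp)
    simp only [typeOffset, List.map_cons, List.cons.injEq] at h
    intro x hx
    rcases List.mem_append.mp hx with hx | hx
    · exact dimOffset_inj _ hd.1 _ hd.2.1
        (fun y hy => (ι.2 y).1 (hd.2.2.1 y hy))
        (fun y hy => (ι'.2 y).1 (hd.2.2.1 y hy)) h.1 x hx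
    · exact ih (WFType_tail hwf) h.2 x hx

lemma type_decode (τ : DType) (hwf : H.WFType τ) (v : List ℕ) (hv : Valid τ v) :
    ∃ g : String → ℕ, (∀ x ∈ typeAxes τ, g x < H.size x) ∧
      (∀ x ∉ typeAxes τ, g x = 0) ∧ rawOffset H τ g = v := by
  induction τ generalizing v with
  | nil =>
    cases hv
    exact ⟨fun _ => 0, by simp [typeAxes], by simp, rfl⟩
  | cons d τ ih =>
    cases hv with
    | cons hw hv' =>
      rename_i w v'
      have hd := hwf.1 d (by simp)
      obtain ⟨gd, hgd1, hgd2, hgd3⟩ := dim_decode d.tile hd.1 d.axes hd.2.1 w hw.1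
        (by rw [hd.2.2.2]; exact hw.2)
        (fun x hx => H.size_pos x (hd.2.2.1 x hx))
      obtain ⟨g', hg1, hg2, hg3⟩ := ih (WFType_tail hwf) _ hv'
      classical
      refine ⟨fun y => if y ∈ d.axes then gd y else g' y, ?_, ?_, ?_⟩
      · intro x hx
        rcases List.mem_append.mp hx with hx | hx
        · simpa [hx] using hgd1 x hx
        · have : x ∉ d.axes := fun h => WFType_head_disj hwf x h hx
          simpa [this] using hg1 x hx
      · intro x hx
        have h1 : x ∉ d.axes := fun h => hx (by simp [typeAxes, h])
        have h2 : x ∉ typeAxes τ := fun h => hx (by simp [typeAxes, h])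
        simp [h1, hg2 x h2]
      · simp only [rawOffset, List.map_cons, List.cons.injEq]
        constructor
        · rw [dimOffset_congr (H := H) _ _ (ι' := gd) (fun x hx => by simp [hx])]
          exact hgd3
        · rw [show (τ.map fun e => dimOffset H e.tile e.axes
              (fun y => if y ∈ d.axes then gd y else g' y))
              = rawOffset H τ g' from rawOffset_congr τ (fun x hx => by
                have : x ∉ d.axes := fun h => WFType_head_disj hwf x h hx
                simp [this])]
          exact hg3

end Stmt7Aux
section Stmt7Aux2

variable {H : Mesh}

/-- Index tuples are equivalent to dependent functions on the axes. -/
def E0 (H : Mesh) : IndexTuple H ≃ ((x : {y // y ∈ H.axes}) → Fin (H.size x.val)) where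
  toFun ι x := ⟨ι.1 x.val, (ι.2 x.val).1 x.2⟩
  invFun f := ⟨fun y => if h : y ∈ H.axes then (f ⟨y, h⟩ : ℕ) else 0, fun y => by
    constructor
    · intro h; simp only [dif_pos h]; exact (f ⟨y, h⟩).2
    · intro h; simp only [dif_neg h]⟩
  left_inv ι := Subtype.ext (funext fun y => by
    by_cases h : y ∈ H.axes
    · simp [h]
    · simp [h, (ι.2 y).2 h])
  right_inv f := funext fun x => Fin.ext (by simp)

lemma finite_indexTuple (H : Mesh) : Finite (IndexTuple H) :=
  Finite.of_equiv _ (E0 H).symm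

lemma exists_perm_of_card_fibers {α : Type*} {β : Type*} [Finite α] (f g : α → β)
    (h : ∀ b, Nat.card {a // f a = b} = Nat.card {a // g a = b}) :
    ∃ π : Equiv.Perm α, g = f ∘ π := by
  have e : ∀ b, ({a // g a = b} ≃ {a // f a = b}) := fun b =>
    Classical.choice (Finite.card_eq.mp (h b).symm)
  refine ⟨((Equiv.sigmaFiberEquiv g).symm.trans
    (Equiv.sigmaCongrRight e)).trans (Equiv.sigmaFiberEquiv f), ?_⟩
  funext a
  have hsymm : (Equiv.sigmaFiberEquiv g).symm a = ⟨g a, ⟨a, rfl⟩⟩ := by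
    apply (Equiv.sigmaFiberEquiv g).injective
    simp [Equiv.sigmaFiberEquiv]
  simp only [Function.comp_apply, Equiv.trans_apply, hsymm, Equiv.sigmaCongrRight_apply]
  exact ((e (g a) ⟨a, rfl⟩).2).symm

lemma card_fiber_valid (τ : DType) (hwf : H.WFType τ) (v : List ℕ) (hv : Valid τ v) :
    Nat.card {ι : IndexTuple H // typeOffset H τ ι = v}
      = ∏ x ∈ H.axes \ (typeAxes τ).toFinset, H.size x := by
  classical
  obtain ⟨g, hg1, hg2, hg3⟩ := type_decode τ hwf v hv
  set s : Finset String := H.axes \ (typeAxes τ).toFinset with hs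
  have hsub : ∀ x : {y // y ∈ s}, x.val ∈ H.axes := fun x => (Finset.mem_sdiff.mp x.2).1
  let F : {ι : IndexTuple H // typeOffset H τ ι = v} →
      ((x : {y // y ∈ s}) → Fin (H.size x.val)) :=
    fun ι x => ⟨ι.1.1 x.val, (ι.1.2 x.val).1 (hsub x)⟩
  have hbij : Function.Bijective F := by
    constructor
    · rintro ⟨⟨ι, hι⟩, hιv⟩ ⟨⟨ι', hι'⟩, hι'v⟩ hFe
      apply Subtype.ext; apply Subtype.ext; funext y
      show ι y = ι' y
      by_cases hy : y ∈ typeAxes τ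
      · exact typeOffset_inj τ hwf (hιv.trans hι'v.symm) y hy
      · by_cases hy2 : y ∈ H.axes
        · have hys : y ∈ s := Finset.mem_sdiff.mpr ⟨hy2, by simpa using hy⟩
          exact congrArg Fin.val (congrFun hFe ⟨y, hys⟩)
        · rw [(hι y).2 hy2, (hι' y).2 hy2]
    · intro r
      refine ⟨⟨⟨fun y => if hy : y ∈ typeAxes τ then g y else
          if h : y ∈ H.axes then
            (r ⟨y, Finset.mem_sdiff.mpr ⟨h, by simpa using hy⟩⟩ : ℕ) else 0, ?_⟩, ?_⟩, ?_⟩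
      · intro y
        constructor
        · intro h
          by_cases hy : y ∈ typeAxes τ
          · simpa [hy] using hg1 y hy
          · simp only [dif_neg hy, dif_pos h]
            exact (r ⟨y, Finset.mem_sdiff.mpr ⟨h, by simpa using hy⟩⟩).2
        · intro h
          have hy : y ∉ typeAxes τ := fun hc => h (typeAxes_subset hwf y hc)
          simp [hy, h]
      · rw [typeOffset_eq_raw]
        rw [rawOffset_congr τ (g' := g) (fun x hx => by simp [hx])]
        exact hg3
      · funext x
        apply Fin.ext
        have hx1 : x.val ∉ typeAxes τ := by
          have := (Finset.mem_sdiff.mp x.2).2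
          simpa using this
        simp only [F, dif_neg hx1, dif_pos (hsub x)]
  rw [Nat.card_congr (Equiv.ofBijective F hbij), Nat.card_pi]
  simp only [Nat.card_eq_fintype_card, Fintype.card_fin]
  exact Finset.prod_coe_sort s H.size

lemma card_fiber_invalid (τ : DType) (hwf : H.WFType τ) (v : List ℕ) (hv : ¬ Valid τ v) :
    Nat.card {ι : IndexTuple H // typeOffset H τ ι = v} = 0 := by
  have : IsEmpty {ι : IndexTuple H // typeOffset H τ ι = v} :=
    ⟨fun ι => hv (ι.2 ▸ valid_typeOffset τ hwf ι.1)⟩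
  exact Nat.card_of_isEmpty

lemma valid_congr : ∀ {τ₁ τ₂ : DType}, globaltype τ₁ = globaltype τ₂ →
    localtype τ₁ = localtype τ₂ → ∀ v, Valid τ₁ v → Valid τ₂ v := by
  intro τ₁
  induction τ₁ with
  | nil =>
    intro τ₂ hg _ v hv
    cases hv
    have : τ₂ = [] := by simpa [globaltype] using hg.symm
    subst this
    exact List.Forall₂.nil
  | cons d τ ih =>
    intro τ₂ hg hl v hv
    cases τ₂ with
    | nil => simp [globaltype] at hg
    | cons d' τ' =>
      cases hv with
      | cons hw hv' =>
        simp only [globaltype, localtype, List.map_cons, List.cons.injEq] at hg hl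
        exact List.Forall₂.cons ⟨hl.1 ▸ hw.1, hg.1 ▸ hw.2⟩ (ih hg.2 hl.2 _ hv')

lemma prod_typeAxes : ∀ (τ : DType), H.WFType τ →
    ((typeAxes τ).map H.size).prod * (localtype τ).prod = (globaltype τ).prod := by
  intro τ
  induction τ with
  | nil => intro _; simp [typeAxes, localtype, globaltype]
  | cons d τ ih =>
    intro hwf
    have hd := hwf.1 d (by simp)
    simp only [typeAxes, localtype, globaltype, List.map_cons, List.map_append,
      List.prod_cons, List.prod_append]
    have ih' := ih (WFType_tail hwf)
    simp only [localtype, globaltype] at ih'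
    rw [← ih', ← hd.2.2.2]
    ring

lemma compl_prod_eq (τ₁ τ₂ : DType) (h1 : H.WFType τ₁) (h2 : H.WFType τ₂)
    (hg : globaltype τ₁ = globaltype τ₂) (hl : localtype τ₁ = localtype τ₂) :
    ∏ x ∈ H.axes \ (typeAxes τ₁).toFinset, H.size x
      = ∏ x ∈ H.axes \ (typeAxes τ₂).toFinset, H.size x := by
  classical
  have hL : 0 < (localtype τ₂).prod := by
    apply List.prod_pos
    intro t ht
    obtain ⟨d, hd, rfl⟩ := List.mem_map.mp ht
    exact (h2.1 d hd).1
  have hQ : ((typeAxes τ₁).map H.size).prod = ((typeAxes τ₂).map H.size).prod := by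
    have e1 := prod_typeAxes τ₁ h1
    have e2 := prod_typeAxes τ₂ h2
    rw [hl, hg] at e1
    exact Nat.eq_of_mul_eq_mul_right hL (e1.trans e2.symm)
  have hsub1 : (typeAxes τ₁).toFinset ⊆ H.axes :=
    fun x hx => typeAxes_subset h1 x (List.mem_toFinset.mp hx)
  have hsub2 : (typeAxes τ₂).toFinset ⊆ H.axes :=
    fun x hx => typeAxes_subset h2 x (List.mem_toFinset.mp hx)
  have f1 := Finset.prod_sdiff (f := H.size) hsub1
  have f2 := Finset.prod_sdiff (f := H.size) hsub2
  have t1 : ∏ x ∈ (typeAxes τ₁).toFinset, H.size x = ((typeAxes τ₁).map H.size).prod :=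
    List.prod_toFinset _ (typeAxes_nodup h1)
  have t2 : ∏ x ∈ (typeAxes τ₂).toFinset, H.size x = ((typeAxes τ₂).map H.size).prod :=
    List.prod_toFinset _ (typeAxes_nodup h2)
  have pos : 0 < ∏ x ∈ (typeAxes τ₁).toFinset, H.size x := by
    apply Finset.prod_pos
    intro x hx
    exact H.size_pos x (hsub1 hx)
  apply Nat.eq_of_mul_eq_mul_right pos
  calc (∏ x ∈ H.axes \ (typeAxes τ₁).toFinset, H.size x) * ∏ x ∈ (typeAxes τ₁).toFinset, H.size x
      = ∏ x ∈ H.axes, H.size x := f1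
    _ = (∏ x ∈ H.axes \ (typeAxes τ₂).toFinset, H.size x) * ∏ x ∈ (typeAxes τ₂).toFinset, H.size x := f2.symm
    _ = (∏ x ∈ H.axes \ (typeAxes τ₂).toFinset, H.size x) * ∏ x ∈ (typeAxes τ₁).toFinset, H.size x := by
        rw [t2, ← hQ, ← t1]

end Stmt7Aux2

/-- Lemma 5.1: equal global and local types imply the base offset maps are related
by a permutation of the index tuples. -/
theorem stmt7 (H : Mesh) (τ₁ τ₂ : DType) (h1 : H.WFType τ₁) (h2 : H.WFType τ₂)
    (hg : globaltype τ₁ = globaltype τ₂) (hl : localtype τ₁ = localtype τ₂) :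
    ∃ π : Equiv.Perm (IndexTuple H), typeOffset H τ₂ = typeOffset H τ₁ ∘ π := by
  classical
  haveI : Finite (IndexTuple H) := finite_indexTuple H
  apply exists_perm_of_card_fibers
  intro v
  by_cases hv : Valid τ₁ v
  · have hv2 : Valid τ₂ v := valid_congr hg hl v hv
    rw [card_fiber_valid τ₁ h1 v hv, card_fiber_valid τ₂ h2 v hv2]
    exact compl_prod_eq τ₁ τ₂ h1 h2 hg hl
  · have hv2 : ¬ Valid τ₂ v := fun h => hv (valid_congr hg.symm hl.symm v h)
    rw [card_fiber_invalid τ₁ h1 v hv, card_fiber_invalid τ₂ h2 v hv2]
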